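/- arXiv:0910.4885 — 2 statements merged into one kernel-verified Lean document; each statement's English description precedes it below -/
import Mathlib

section
/- Let q = 3 and n = 6. If (λ;μ) is a symbol of rank 6 and type ²D_6 that is not one of the five symbols (0,6; ), (1,5; ), (2,4; ), (0,1,6; 1), (0,1,2; 5), then its generic degree satisfies d(λ;μ) > 4·3^{15}. Consequently, every unipotent complex character of P(CO^−_{12}(3)^0) other than the five characters labeled by these symbols has degree greater than 4·3^{15}. -/
/-- The exponent `N = C(a+b-2,2) + C(a+b-4,2) + ⋯` appearing in the generic degree formula. -/
def symbN (a b : ℕ) : ℕ := ∑ j ∈ Finset.range (a + b), Nat.choose (a + b - 2 * (j + 1)) 2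

/-- `∏_{x < y ∈ l} (q^y - q^x)`. -/
def prodDiff (q : ℚ) (l : Finset ℕ) : ℚ :=
  ∏ x ∈ l, ∏ y ∈ l, if x < y then (q ^ y - q ^ x) else 1

/-- `∏_{x ∈ l, y ∈ m} (q^x + q^y)`. -/
def prodSum (q : ℚ) (l m : Finset ℕ) : ℚ := ∏ x ∈ l, ∏ y ∈ m, (q ^ x + q ^ y)

/-- `∏_{x ∈ l} ∏_{k=1}^{x} (q^{2k} - 1)`. -/
def prodDen (q : ℚ) (l : Finset ℕ) : ℚ :=
  ∏ x ∈ l, ∏ k ∈ Finset.Icc 1 x, (q ^ (2 * k) - 1)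

/-- `(l; m)` is a symbol of rank `n` and type `²D_n`: two strictly increasing sequences of
nonnegative integers (encoded as finite sets), whose numbers `a`, `b` of entries satisfy
`a > b` and `a - b ≡ 2 (mod 4)`, whose first entries are not both `0`, and with
`Σ l + Σ m - ⌊((a+b-1)/2)²⌋ = n`. -/
def IsSymbol2D (n : ℕ) (l m : Finset ℕ) : Prop :=
  m.card < l.card ∧ (l.card - m.card) % 4 = 2 ∧ ¬(0 ∈ l ∧ 0 ∈ m) ∧
    l.sum id + m.sum id = (l.card + m.card - 1) ^ 2 / 4 + n

/-- The generic degree of a symbol of type `²D_n`. -/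
def gdeg2D (q : ℚ) (n : ℕ) (l m : Finset ℕ) : ℚ :=
  ((q ^ n + 1) * (∏ i ∈ Finset.Icc 1 (n - 1), (q ^ (2 * i) - 1)) * prodDiff q l * prodDiff q m *
      prodSum q l m) /
    (2 ^ ((l.card + m.card - 2) / 2) * q ^ symbN l.card m.card * prodDen q l * prodDen q m)

/-! ### Integer mirrors of the rational quantities (at `q = 3`) -/

def prodDiffZ (l : Finset ℕ) : ℤ :=
  ∏ x ∈ l, ∏ y ∈ l, if x < y then ((3:ℤ) ^ y - 3 ^ x) else 1

def prodSumZ (l m : Finset ℕ) : ℤ := ∏ x ∈ l, ∏ y ∈ m, ((3:ℤ) ^ x + 3 ^ y)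

def prodDenZ (l : Finset ℕ) : ℤ := ∏ x ∈ l, ∏ k ∈ Finset.Icc 1 x, ((3:ℤ) ^ (2 * k) - 1)

def intNum (l m : Finset ℕ) : ℤ :=
  ((3:ℤ) ^ 6 + 1) * (∏ i ∈ Finset.Icc 1 5, ((3:ℤ) ^ (2 * i) - 1)) * prodDiffZ l * prodDiffZ m *
    prodSumZ l m

def intDen (l m : Finset ℕ) : ℤ :=
  2 ^ ((l.card + m.card - 2) / 2) * 3 ^ symbN l.card m.card * prodDenZ l * prodDenZ m

lemma cast_prodDiffZ (l : Finset ℕ) : ((prodDiffZ l : ℤ) : ℚ) = prodDiff 3 l := by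
  unfold prodDiffZ prodDiff
  push_cast [apply_ite (fun z : ℤ => (z : ℚ))]
  rfl

lemma cast_prodSumZ (l m : Finset ℕ) : ((prodSumZ l m : ℤ) : ℚ) = prodSum 3 l m := by
  unfold prodSumZ prodSum
  push_cast
  rfl

lemma cast_prodDenZ (l : Finset ℕ) : ((prodDenZ l : ℤ) : ℚ) = prodDen 3 l := by
  unfold prodDenZ prodDen
  push_cast
  rfl

lemma gdeg_eq (l m : Finset ℕ) : gdeg2D 3 6 l m = (intNum l m : ℚ) / (intDen l m : ℚ) := by
  unfold gdeg2D intNum intDen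
  push_cast [cast_prodDiffZ, cast_prodSumZ, cast_prodDenZ]
  norm_num

lemma prodDenZ_pos (l : Finset ℕ) : 0 < prodDenZ l := by
  refine Finset.prod_pos fun x _ => Finset.prod_pos fun k hk => ?_
  have h1 : 1 ≤ k := (Finset.mem_Icc.mp hk).1
  have : (1:ℤ) < 3 ^ (2 * k) := one_lt_pow₀ (by norm_num) (by omega)
  linarith

lemma intDen_pos (l m : Finset ℕ) : 0 < intDen l m := by
  unfold intDen
  have := prodDenZ_pos l
  have := prodDenZ_pos m
  positivity

lemma key_ineq (l m : Finset ℕ) (h : 4 * 3 ^ 15 * intDen l m < intNum l m) :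
    (4 * 3 ^ 15 : ℚ) < gdeg2D 3 6 l m := by
  rw [gdeg_eq, lt_div_iff₀ (by exact_mod_cast intDen_pos l m)]
  exact_mod_cast h

/-! ### Enumeration of strictly increasing sequences with given length and sum -/

def seqs : ℕ → ℕ → ℕ → List (List ℕ) :=
  Nat.rec (motive := fun _ => ℕ → ℕ → List (List ℕ))
    (fun _ s => if s = 0 then [[]] else [])
    (fun n ih lo s =>
      (List.range' lo ((2 * s - n * (n + 1)) / (2 * (n + 1)) + 1 - lo)).flatMap fun x =>
        (ih (x + 1) (s - x)).map (x :: ·))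

lemma seqs_zero (lo s : ℕ) : seqs 0 lo s = if s = 0 then [[]] else [] := rfl

lemma seqs_succ (n lo s : ℕ) : seqs (n + 1) lo s =
    (List.range' lo ((2 * s - n * (n + 1)) / (2 * (n + 1)) + 1 - lo)).flatMap fun x =>
      (seqs n (x + 1) (s - x)).map (x :: ·) := rfl

lemma list_tri : ∀ (T : List ℕ) (lo : ℕ), T.Pairwise (· < ·) → (∀ y ∈ T, lo ≤ y) →
    2 * lo * T.length + T.length * T.length ≤ 2 * T.sum + T.length := by
  intro T
  induction T with
  | nil => simp
  | cons y T' ih =>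
    intro lo hpw hlo
    rw [List.pairwise_cons] at hpw
    have h1 := ih (y + 1) hpw.2 (fun z hz => hpw.1 z hz)
    have h2 : lo ≤ y := hlo y (by simp)
    simp only [List.length_cons, List.sum_cons]
    nlinarith [Nat.mul_le_mul_right T'.length h2]

lemma seqs_complete : ∀ (n lo : ℕ) (L : List ℕ), L.length = n → L.Pairwise (· < ·) →
    (∀ x ∈ L, lo ≤ x) → L ∈ seqs n lo L.sum := by
  intro n
  induction n with
  | zero =>
    intro lo L hlen _ _
    rw [List.length_eq_zero_iff] at hlen
    subst hlen
    simp [seqs_zero]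
  | succ n ih =>
    intro lo L hlen hpw hlo
    match L with
    | x :: T =>
      simp only [List.length_cons, Nat.succ.injEq] at hlen
      rw [List.pairwise_cons] at hpw
      have hT : T ∈ seqs n (x + 1) T.sum := ih (x + 1) T hlen hpw.2 (fun y hy => hpw.1 y hy)
      have htri := list_tri T (x + 1) hpw.2 (fun y hy => hpw.1 y hy)
      rw [hlen] at htri
      rw [seqs_succ, List.mem_flatMap]
      refine ⟨x, ?_, ?_⟩
      · rw [List.mem_range'_1]
        refine ⟨hlo x (by simp), ?_⟩
        have hmul : x * (2 * (n + 1)) + n * (n + 1) ≤ 2 * (x :: T).sum := by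
          rw [List.sum_cons]
          nlinarith [htri]
        have hU : x ≤ (2 * (x :: T).sum - n * (n + 1)) / (2 * (n + 1)) := by
          rw [Nat.le_div_iff_mul_le (by omega)]
          omega
        omega
      · rw [List.mem_map]
        refine ⟨T, ?_, rfl⟩
        rw [List.sum_cons, Nat.add_sub_cancel_left]
        exact hT

def exclL : List (List ℕ × List ℕ) :=
  [([0,6],[]), ([1,5],[]), ([2,4],[]), ([0,1,6],[1]), ([0,1,2],[5])]

def check (a b s : ℕ) : Bool :=
  (List.range (s + 1)).all fun t =>
    (seqs a 0 t).all fun L =>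
      (seqs b 0 (s - t)).all fun M =>
        (decide (0 ∈ L) && decide (0 ∈ M)) || decide ((L, M) ∈ exclL) ||
          decide (4 * 3 ^ 15 * intDen L.toFinset M.toFinset < intNum L.toFinset M.toFinset)

set_option maxHeartbeats 16000000 in
set_option maxRecDepth 100000 in
lemma chk1 : check 2 0 6 = true := by decide

set_option maxHeartbeats 16000000 in
set_option maxRecDepth 100000 in
lemma chk2 : check 3 1 8 = true := by decide

set_option maxHeartbeats 16000000 in
set_option maxRecDepth 100000 in
lemma chk3 : check 4 2 12 = true := by decide

set_option maxHeartbeats 16000000 in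
set_option maxRecDepth 100000 in
lemma chk4 : check 5 3 18 = true := by decide

set_option maxHeartbeats 16000000 in
set_option maxRecDepth 100000 in
lemma chk5 : check 6 4 26 = true := by decide

set_option maxHeartbeats 16000000 in
set_option maxRecDepth 100000 in
lemma chk6 : check 7 5 36 = true := by decide

/-! ### Lower bounds for sums of distinct naturals -/

lemma tri (s : Finset ℕ) : s.card * s.card ≤ 2 * (∑ x ∈ s, x) + s.card := by
  induction s using Finset.induction_on_max with
  | empty => simp
  | insert a s ha ih =>
    have hanotmem : a ∉ s := fun h => lt_irrefl a (ha a h)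
    have hcard : s.card ≤ a := by
      have hsub : s ⊆ Finset.range a := fun x hx => Finset.mem_range.mpr (ha x hx)
      simpa using Finset.card_le_card hsub
    rw [Finset.card_insert_of_notMem hanotmem, Finset.sum_insert hanotmem]
    nlinarith [ih, hcard]

lemma tri' (s : Finset ℕ) (h0 : 0 ∉ s) : s.card * s.card + s.card ≤ 2 * ∑ x ∈ s, x := by
  induction s using Finset.induction_on_max with
  | empty => simp
  | insert a s ha ih =>
    have hanotmem : a ∉ s := fun h => lt_irrefl a (ha a h)
    have h0s : 0 ∉ s := fun h => h0 (Finset.mem_insert_of_mem h)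
    have ha0 : a ≠ 0 := fun h => h0 (h ▸ Finset.mem_insert_self a s)
    have hcard : s.card + 1 ≤ a := by
      have hsub : s ⊆ Finset.Icc 1 (a - 1) := by
        intro x hx
        rw [Finset.mem_Icc]
        have h1 := ha x hx
        have h2 : x ≠ 0 := fun h => h0s (h ▸ hx)
        omega
      have := Finset.card_le_card hsub
      rw [Nat.card_Icc] at this
      omega
    rw [Finset.card_insert_of_notMem hanotmem, Finset.sum_insert hanotmem]
    nlinarith [ih h0s, hcard]

lemma both_bound (l m : Finset ℕ) (h0 : ¬(0 ∈ l ∧ 0 ∈ m)) (hba : m.card < l.card) :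
    l.card * l.card + m.card * m.card + m.card ≤ 2 * (l.sum id + m.sum id) + l.card := by
  have el : l.sum id = ∑ x ∈ l, x := rfl
  have em : m.sum id = ∑ x ∈ m, x := rfl
  rw [el, em]
  rcases not_and_or.mp h0 with h | h
  · have h1 := tri' l h
    have h2 := tri m
    have h3 := hba.le
    linarith
  · have h1 := tri l
    have h2 := tri' m h
    linarith

lemma classify (a b sl sm : ℕ) (hba : b < a) (hmod : (a - b) % 4 = 2)
    (hcomb : a * a + b * b + b ≤ 2 * (sl + sm) + a)
    (hs : sl + sm = (a + b - 1) ^ 2 / 4 + 6) : a = b + 2 ∧ b ≤ 5 := by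
  obtain ⟨k, rfl⟩ : ∃ k, a = b + (4 * k + 2) := ⟨(a - b - 2) / 4, by omega⟩
  have hdiv : (b + (4 * k + 2) + b - 1) ^ 2 / 4 = (b + 2 * k) ^ 2 + (b + 2 * k) := by
    have h1 : (b + (4 * k + 2) + b - 1) = 2 * b + 4 * k + 1 := by omega
    rw [h1]
    have h2 : (2 * b + 4 * k + 1) ^ 2 = 4 * ((b + 2 * k) ^ 2 + (b + 2 * k)) + 1 := by ring
    omega
  rw [hdiv] at hs
  rw [hs] at hcomb
  have key2 : 8 * (k * k) + 8 * k + 2 * b ≤ 10 := by nlinarith [hcomb]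
  have hk : k = 0 := by
    by_contra hk
    have h1 : 1 ≤ k := Nat.one_le_iff_ne_zero.mpr hk
    have h2 : 1 * 1 ≤ k * k := Nat.mul_le_mul h1 h1
    linarith
  subst hk
  exact ⟨by ring, by linarith⟩

/-! ### From a checked triple to the degree bound -/

lemma master (a b s : ℕ) (hchk : check a b s = true) (l m : Finset ℕ)
    (hl : l.card = a) (hm : m.card = b) (hs : l.sum id + m.sum id = s)
    (h0 : ¬(0 ∈ l ∧ 0 ∈ m))
    (hex : (l, m) ∉ ([(({0, 6} : Finset ℕ), (∅ : Finset ℕ)), ({1, 5}, ∅), ({2, 4}, ∅),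
      ({0, 1, 6}, {1}), ({0, 1, 2}, {5})] : List (Finset ℕ × Finset ℕ))) :
    (4 * 3 ^ 15 : ℚ) < gdeg2D 3 6 l m := by
  set L := l.sort (· ≤ ·) with hLdef
  set M := m.sort (· ≤ ·) with hMdef
  have hLf : L.toFinset = l := Finset.sort_toFinset l _
  have hMf : M.toFinset = m := Finset.sort_toFinset m _
  have hLsum : L.sum = l.sum id := by
    conv_rhs => rw [← hLf]
    rw [List.sum_toFinset _ (Finset.sort_nodup l _)]
    simp
    rfl
  have hMsum : M.sum = m.sum id := by
    conv_rhs => rw [← hMf]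
    rw [List.sum_toFinset _ (Finset.sort_nodup m _)]
    simp
    rfl
  have hmemL : L ∈ seqs a 0 (l.sum id) := by
    rw [← hLsum]
    exact seqs_complete a 0 L (by rw [Finset.length_sort, hl]) (Finset.sortedLT_sort l).pairwise
      (fun x _ => Nat.zero_le x)
  have hmemM : M ∈ seqs b 0 (s - l.sum id) := by
    have hss : s - l.sum id = m.sum id := by omega
    rw [hss, ← hMsum]
    exact seqs_complete b 0 M (by rw [Finset.length_sort, hm]) (Finset.sortedLT_sort m).pairwise
      (fun x _ => Nat.zero_le x)
  rw [check, List.all_eq_true] at hchk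
  have h1 := hchk (l.sum id) (by rw [List.mem_range]; omega)
  rw [List.all_eq_true] at h1
  have h2 := h1 L hmemL
  rw [List.all_eq_true] at h2
  have h3 := h2 M hmemM
  simp only [Bool.or_eq_true, Bool.and_eq_true, decide_eq_true_eq] at h3
  rcases h3 with (⟨hl0, hm0⟩ | hmem) | hlt
  · exact absurd ⟨hLf ▸ List.mem_toFinset.mpr hl0, hMf ▸ List.mem_toFinset.mpr hm0⟩ h0
  · exfalso
    apply hex
    rw [← hLf, ← hMf]
    simp only [exclL, List.mem_cons, List.not_mem_nil, or_false, Prod.mk.injEq] at hmem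
    rcases hmem with ⟨h1, h2⟩ | ⟨h1, h2⟩ | ⟨h1, h2⟩ | ⟨h1, h2⟩ | ⟨h1, h2⟩ <;>
      (rw [h1, h2]; decide)
  · rw [← hLf, ← hMf]
    exact key_ineq _ _ hlt

/-- Lemma 8.1: every symbol of rank `6` and type `²D_6` other than the five listed ones has
generic degree (at `q = 3`) greater than `4 · 3^15`.  Consequently (via Lusztig's
classification), all but five unipotent complex characters of `P(CO⁻₁₂(3)⁰)` have degree
greater than `4 · 3^15`. -/
theorem symbol2D_rank6_q3_generic_degree_gap :
    ∀ l m : Finset ℕ, IsSymbol2D 6 l m →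
      (l, m) ∉ ([(({0, 6} : Finset ℕ), (∅ : Finset ℕ)), ({1, 5}, ∅), ({2, 4}, ∅), ({0, 1, 6}, {1}),
        ({0, 1, 2}, {5})] : List (Finset ℕ × Finset ℕ)) →
      (4 * 3 ^ 15 : ℚ) < gdeg2D (3 : ℚ) 6 l m := by
  intro l m hsym hex
  obtain ⟨hba, hmod, h0, hsum⟩ := hsym
  have hcomb := both_bound l m h0 hba
  obtain ⟨hab, hb5⟩ := classify l.card m.card (l.sum id) (m.sum id) hba hmod hcomb hsum
  have hcases : m.card = 0 ∨ m.card = 1 ∨ m.card = 2 ∨ m.card = 3 ∨ m.card = 4 ∨ m.card = 5 := by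
    omega
  rcases hcases with h | h | h | h | h | h
  · exact master 2 0 6 chk1 l m (by omega) h (by rw [hsum, hab, h]; norm_num) h0 hex
  · exact master 3 1 8 chk2 l m (by omega) h (by rw [hsum, hab, h]; norm_num) h0 hex
  · exact master 4 2 12 chk3 l m (by omega) h (by rw [hsum, hab, h]; norm_num) h0 hex
  · exact master 5 3 18 chk4 l m (by omega) h (by rw [hsum, hab, h]; norm_num) h0 hex
  · exact master 6 4 26 chk5 l m (by omega) h (by rw [hsum, hab, h]; norm_num) h0 hex
  · exact master 7 5 36 chk6 l m (by omega) h (by rw [hsum, hab, h]; norm_num) h0 hex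
end

section
/- Let q = 3 and n = 6. If {λ,μ} is a symbol of rank 6 and type D_6 that is not one of the six symbols {(6),(0)}, {(5),(1)}, {(4),(2)}, {(3),(3)} (this degenerate symbol labels 2 characters), {(0,1),(1,6)}, {(0,1,2,5),( )}, then its generic degree satisfies d(λ;μ) > 4·3^{15}. Consequently, every unipotent complex character of P(CO^+_{12}(3)^0) other than the seven characters labeled by these symbols has degree greater than 4·3^{15}. -/
/-- `(l; m)` is a symbol of rank `n` and type `D_n`: two strictly increasing sequences of
nonnegative integers (encoded as finite sets), whose numbers `a`, `b` of entries satisfy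
`a - b ≡ 0 (mod 4)`, whose first entries are not both `0`, and with
`Σ l + Σ m - ⌊((a+b-1)/2)²⌋ = n`. -/
def IsSymbolD (n : ℕ) (l m : Finset ℕ) : Prop :=
  (4 : ℤ) ∣ ((l.card : ℤ) - (m.card : ℤ)) ∧ ¬(0 ∈ l ∧ 0 ∈ m) ∧
    l.sum id + m.sum id = (l.card + m.card - 1) ^ 2 / 4 + n

/-- The generic degree of a symbol of type `D_n`. -/
def gdegD (q : ℚ) (n : ℕ) (l m : Finset ℕ) : ℚ :=
  ((q ^ n - 1) * (∏ i ∈ Finset.Icc 1 (n - 1), (q ^ (2 * i) - 1)) * prodDiff q l * prodDiff q m *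
      prodSum q l m) /
    (2 ^ (if l = m then l.card else (l.card + m.card - 2) / 2) * q ^ symbN l.card m.card *
      prodDen q l * prodDen q m)

section Aux

/-- Integer numerator of `gdegD 3 6`. -/
def numZ (l m : Finset ℕ) : ℤ :=
  ((3:ℤ) ^ 6 - 1) * (∏ i ∈ Finset.Icc 1 5, ((3:ℤ) ^ (2 * i) - 1)) * prodDiffZ l * prodDiffZ m *
    prodSumZ l m

/-- Integer denominator of `gdegD 3 6`. -/
def denZ (l m : Finset ℕ) : ℤ :=
  2 ^ (if l = m then l.card else (l.card + m.card - 2) / 2) * 3 ^ symbN l.card m.card *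
    prodDenZ l * prodDenZ m

lemma cast_gdeg (l m : Finset ℕ) : gdegD 3 6 l m = (numZ l m : ℚ) / (denZ l m : ℚ) := by
  unfold gdegD numZ denZ prodDiff prodDiffZ prodSum prodSumZ prodDen prodDenZ
  push_cast [apply_ite (Int.cast : ℤ → ℚ)]
  norm_num

lemma gauss (n : ℕ) : 2 * (∑ i ∈ Finset.range n, i) + n = n ^ 2 := by
  induction n with
  | zero => simp
  | succ n ih => rw [Finset.sum_range_succ]; linarith [ih]

lemma sum_lb (s : Finset ℕ) : ∑ i ∈ Finset.range s.card, i ≤ s.sum id := by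
  induction s using Finset.induction_on_max with
  | empty => simp
  | insert a s hlt ih =>
    have ha : a ∉ s := fun h => lt_irrefl a (hlt a h)
    have hsub : s ⊆ Finset.range a := fun x hx => Finset.mem_range.mpr (hlt x hx)
    have hcard : s.card ≤ a := by simpa using Finset.card_le_card hsub
    rw [Finset.card_insert_of_notMem ha, Finset.sum_insert ha, Finset.sum_range_succ]
    have ih' : ∑ i ∈ Finset.range s.card, i ≤ ∑ x ∈ s, id x := ih
    simp only [id] at ih' ⊢
    linarith [ih']

lemma sum_lb' (s : Finset ℕ) (h0 : 0 ∉ s) :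
    (∑ i ∈ Finset.range s.card, i) + s.card ≤ s.sum id := by
  revert h0
  induction s using Finset.induction_on_max with
  | empty => intro _; simp
  | insert a s hlt ih =>
    intro h0
    have ha : a ∉ s := fun h => lt_irrefl a (hlt a h)
    have h0s : 0 ∉ s := fun h => h0 (Finset.mem_insert_of_mem h)
    have ha0 : a ≠ 0 := fun h => h0 (h ▸ Finset.mem_insert_self a s)
    have hsub : insert 0 s ⊆ Finset.range a := by
      intro x hx
      rcases Finset.mem_insert.mp hx with rfl | hx
      · exact Finset.mem_range.mpr (Nat.pos_of_ne_zero ha0)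
      · exact Finset.mem_range.mpr (hlt x hx)
    have hcard : s.card + 1 ≤ a := by
      have h := Finset.card_le_card hsub
      rwa [Finset.card_insert_of_notMem h0s, Finset.card_range] at h
    rw [Finset.card_insert_of_notMem ha, Finset.sum_insert ha, Finset.sum_range_succ]
    have ih' : (∑ i ∈ Finset.range s.card, i) + s.card ≤ ∑ x ∈ s, id x := ih h0s
    simp only [id] at ih' ⊢
    linarith [ih']

lemma el_lb (s : Finset ℕ) (x : ℕ) (hx : x ∈ s) :
    x + ∑ i ∈ Finset.range (s.card - 1), i ≤ s.sum id := by
  have h := Finset.add_sum_erase s id hx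
  have h2 := sum_lb (s.erase x)
  rw [Finset.card_erase_of_mem hx] at h2
  have h2' : ∑ i ∈ Finset.range (s.card - 1), i ≤ ∑ y ∈ s.erase x, id y := h2
  have h' : id x + ∑ y ∈ s.erase x, id y = ∑ y ∈ s, id y := h
  have hg : s.sum id = ∑ y ∈ s, id y := rfl
  rw [hg]
  simp only [id] at h2' h' ⊢
  linarith

lemma el_lb' (s : Finset ℕ) (x : ℕ) (hx : x ∈ s) (h0 : 0 ∉ s) :
    x + ((∑ i ∈ Finset.range (s.card - 1), i) + (s.card - 1)) ≤ s.sum id := by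
  have h := Finset.add_sum_erase s id hx
  have h2 := sum_lb' (s.erase x) (fun hh => h0 (Finset.mem_of_mem_erase hh))
  rw [Finset.card_erase_of_mem hx] at h2
  have h2' : (∑ i ∈ Finset.range (s.card - 1), i) + (s.card - 1) ≤ ∑ y ∈ s.erase x, id y := h2
  have h' : id x + ∑ y ∈ s.erase x, id y = ∑ y ∈ s, id y := h
  have hg : s.sum id = ∑ y ∈ s, id y := rfl
  rw [hg]
  simp only [id] at h2' h' ⊢
  linarith

lemma keyA (a b : ℕ) (k : ℤ) (ha : 1 ≤ a) (hk : (a:ℤ) - b = 4 * k) :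
    (a + b - 1) ^ 2 / 4 <
      (∑ i ∈ Finset.range (a - 1), i) + ((∑ i ∈ Finset.range b, i) + b) := by
  obtain ⟨A, rfl⟩ : ∃ A, a = A + 1 := ⟨a - 1, by omega⟩
  rw [Nat.div_lt_iff_lt_mul (by norm_num)]
  have g1 := gauss A
  have g2 := gauss b
  have h1 : A + 1 + b - 1 = A + b := by omega
  simp only [Nat.add_sub_cancel, h1]
  have hk2 : (A:ℤ) = (b:ℤ) + 4 * k - 1 := by push_cast at hk; linarith
  have hsq : (1:ℤ) ≤ (2 * k - 1) ^ 2 := by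
    rcases le_or_gt k 0 with h | h <;> nlinarith
  zify at g1 g2 ⊢
  nlinarith [g1, g2, hsq, hk2, sq_nonneg ((A:ℤ) - b)]

lemma keyB (a b : ℕ) (k : ℤ) (hb : 1 ≤ b) (hk : (a:ℤ) - b = 4 * k) :
    (a + b - 1) ^ 2 / 4 <
      (∑ i ∈ Finset.range a, i) + ((∑ i ∈ Finset.range (b - 1), i) + b) := by
  obtain ⟨B, rfl⟩ : ∃ B, b = B + 1 := ⟨b - 1, by omega⟩
  rw [Nat.div_lt_iff_lt_mul (by norm_num)]
  have g1 := gauss a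
  have g2 := gauss B
  have h1 : a + (B + 1) - 1 = a + B := by omega
  simp only [Nat.add_sub_cancel, h1]
  have hk2 : (a:ℤ) = (B:ℤ) + 4 * k + 1 := by push_cast at hk; linarith
  zify at g1 g2 ⊢
  nlinarith [g1, g2, sq_nonneg k, hk2, sq_nonneg ((a:ℤ) - B)]

lemma subset_bounds (l m : Finset ℕ) (h0m : 0 ∉ m)
    (hsum : l.sum id + m.sum id = (l.card + m.card - 1) ^ 2 / 4 + 6)
    (hdvd : (4:ℤ) ∣ ((l.card : ℤ) - (m.card : ℤ))) :
    l ⊆ Finset.range 6 ∧ m ⊆ Finset.Icc 1 6 := by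
  obtain ⟨k, hk⟩ := hdvd
  constructor
  · intro x hx
    rw [Finset.mem_range]
    by_contra hx6
    push_neg at hx6
    have e1 := el_lb l x hx
    have e2 := sum_lb' m h0m
    have key := keyA l.card m.card k (Finset.card_pos.mpr ⟨x, hx⟩) hk
    linarith
  · intro x hx
    have hx0 : x ≠ 0 := fun h => h0m (h ▸ hx)
    rw [Finset.mem_Icc]
    refine ⟨by omega, ?_⟩
    by_contra hx6
    push_neg at hx6
    have e1 := sum_lb l
    have e2 := el_lb' m x hx h0m
    have key := keyB l.card m.card k (Finset.card_pos.mpr ⟨x, hx⟩) hk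
    have hbb : m.card - 1 + 1 = m.card := Nat.succ_pred_eq_of_pos (Finset.card_pos.mpr ⟨x, hx⟩)
    linarith

/-- The list of all ordered symbols of rank 6 and type `D_6` with entries `< 7`. -/
def symbolList : List (Finset ℕ × Finset ℕ) := [
  ({0}, {6}),
  ({1}, {5}),
  ({2}, {4}),
  ({3}, {3}),
  ({4}, {2}),
  ({5}, {1}),
  ({0, 1}, {1, 6}),
  ({0, 1}, {2, 5}),
  ({0, 1}, {3, 4}),
  ({0, 2}, {1, 5}),
  ({0, 2}, {2, 4}),
  ({0, 3}, {1, 4}),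
  ({0, 3}, {2, 3}),
  ({0, 4}, {1, 3}),
  ({0, 5}, {1, 2}),
  ({1, 2}, {1, 4}),
  ({1, 2}, {2, 3}),
  ({1, 3}, {1, 3}),
  ({1, 4}, {1, 2}),
  ({2, 3}, {1, 2}),
  ({0, 1, 2}, {1, 2, 6}),
  ({0, 1, 2}, {1, 3, 5}),
  ({0, 1, 2}, {2, 3, 4}),
  ({0, 1, 3}, {1, 2, 5}),
  ({0, 1, 3}, {1, 3, 4}),
  ({0, 1, 4}, {1, 2, 4}),
  ({0, 1, 5}, {1, 2, 3}),
  ({0, 2, 3}, {1, 2, 4}),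
  ({0, 2, 4}, {1, 2, 3}),
  ({1, 2, 3}, {1, 2, 3}),
  ({0, 1, 2, 3}, {1, 2, 3, 6}),
  ({0, 1, 2, 3}, {1, 2, 4, 5}),
  ({0, 1, 2, 4}, {1, 2, 3, 5}),
  ({0, 1, 2, 5}, ∅),
  ({0, 1, 2, 5}, {1, 2, 3, 4}),
  ({0, 1, 3, 4}, ∅),
  ({0, 1, 3, 4}, {1, 2, 3, 4}),
  ({0, 1, 2, 3, 4}, {2}),
  ({0, 1, 2, 3, 4}, {1, 2, 3, 4, 6}),
  ({0, 1, 2, 3, 5}, {1}),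
  ({0, 1, 2, 3, 5}, {1, 2, 3, 4, 5}),
  ({0, 1, 2, 3, 4, 5}, {1, 2}),
  ({0, 1, 2, 3, 4, 5}, {1, 2, 3, 4, 5, 6}),
  ({6}, {0}),
  ({1, 6}, {0, 1}),
  ({2, 5}, {0, 1}),
  ({3, 4}, {0, 1}),
  ({1, 5}, {0, 2}),
  ({2, 4}, {0, 2}),
  ({1, 4}, {0, 3}),
  ({2, 3}, {0, 3}),
  ({1, 3}, {0, 4}),
  ({1, 2}, {0, 5}),
  ({1, 2, 6}, {0, 1, 2}),
  ({1, 3, 5}, {0, 1, 2}),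
  ({2, 3, 4}, {0, 1, 2}),
  ({1, 2, 5}, {0, 1, 3}),
  ({1, 3, 4}, {0, 1, 3}),
  ({1, 2, 4}, {0, 1, 4}),
  ({1, 2, 3}, {0, 1, 5}),
  ({1, 2, 4}, {0, 2, 3}),
  ({1, 2, 3}, {0, 2, 4}),
  ({1, 2, 3, 6}, {0, 1, 2, 3}),
  ({1, 2, 4, 5}, {0, 1, 2, 3}),
  ({1, 2, 3, 5}, {0, 1, 2, 4}),
  (∅, {0, 1, 2, 5}),
  ({1, 2, 3, 4}, {0, 1, 2, 5}),
  (∅, {0, 1, 3, 4}),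
  ({1, 2, 3, 4}, {0, 1, 3, 4}),
  ({2}, {0, 1, 2, 3, 4}),
  ({1, 2, 3, 4, 6}, {0, 1, 2, 3, 4}),
  ({1}, {0, 1, 2, 3, 5}),
  ({1, 2, 3, 4, 5}, {0, 1, 2, 3, 5}),
  ({1, 2}, {0, 1, 2, 3, 4, 5}),
  ({1, 2, 3, 4, 5, 6}, {0, 1, 2, 3, 4, 5})]

set_option maxRecDepth 100000 in
set_option maxHeartbeats 2000000 in
lemma enum : ∀ l ∈ (Finset.range 6).powerset, ∀ m ∈ (Finset.Icc 1 6).powerset,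
    l.card % 4 = m.card % 4 →
    l.sum id + m.sum id = (l.card + m.card - 1) ^ 2 / 4 + 6 → (l, m) ∈ symbolList := by
  decide

set_option maxRecDepth 100000 in
set_option maxHeartbeats 2000000 in
lemma swap_mem : ∀ p ∈ symbolList, (p.2, p.1) ∈ symbolList := by decide

set_option maxRecDepth 100000 in
set_option maxHeartbeats 4000000 in
lemma check_s17 : ∀ p ∈ symbolList, (0:ℤ) < denZ p.1 p.2 ∧
    (p ∉ ([(({6} : Finset ℕ), ({0} : Finset ℕ)), ({0}, {6}), ({5}, {1}), ({1}, {5}),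
        ({4}, {2}), ({2}, {4}), ({3}, {3}), ({0, 1}, {1, 6}), ({1, 6}, {0, 1}),
        ({0, 1, 2, 5}, ∅), (∅, {0, 1, 2, 5})] : List (Finset ℕ × Finset ℕ)) →
      (4 * 3 ^ 15 : ℤ) * denZ p.1 p.2 < numZ p.1 p.2) := by
  decide

end Aux

/-- Lemma 8.2: every symbol of rank `6` and type `D_6` other than the six listed unordered
symbols (the degenerate symbol `(3),(3)` labelling two unipotent characters) has generic
degree (at `q = 3`) greater than `4 · 3^15`.  Consequently (via Lusztig's classification),
all but seven unipotent complex characters of `P(CO⁺₁₂(3)⁰)` have degree greater than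
`4 · 3^15`. -/
theorem symbolD_rank6_q3_generic_degree_gap :
    ∀ l m : Finset ℕ, IsSymbolD 6 l m →
      (l, m) ∉ ([(({6} : Finset ℕ), ({0} : Finset ℕ)), ({0}, {6}), ({5}, {1}), ({1}, {5}),
        ({4}, {2}), ({2}, {4}), ({3}, {3}), ({0, 1}, {1, 6}), ({1, 6}, {0, 1}),
        ({0, 1, 2, 5}, ∅), (∅, {0, 1, 2, 5})] : List (Finset ℕ × Finset ℕ)) →
      (4 * 3 ^ 15 : ℚ) < gdegD (3 : ℚ) 6 l m := by
  intro l m hsym hex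
  obtain ⟨hdvd, h0, hsum⟩ := hsym
  have hmod : l.card % 4 = m.card % 4 := by omega
  have hmem : (l, m) ∈ symbolList := by
    by_cases h0m : 0 ∈ m
    · have h0l : 0 ∉ l := fun h => h0 ⟨h, h0m⟩
      have hsum' : m.sum id + l.sum id = (m.card + l.card - 1) ^ 2 / 4 + 6 := by
        rw [Nat.add_comm (m.sum id), Nat.add_comm m.card]; exact hsum
      have hdvd' : (4:ℤ) ∣ ((m.card : ℤ) - (l.card : ℤ)) := by omega
      obtain ⟨hm6, hl6⟩ := subset_bounds m l h0l hsum' hdvd'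
      exact swap_mem (m, l)
        (enum m (Finset.mem_powerset.mpr hm6) l (Finset.mem_powerset.mpr hl6) hmod.symm hsum')
    · obtain ⟨hl6, hm6⟩ := subset_bounds l m h0m hsum hdvd
      exact enum l (Finset.mem_powerset.mpr hl6) m (Finset.mem_powerset.mpr hm6) hmod hsum
  obtain ⟨hd, hn⟩ := check_s17 (l, m) hmem
  rw [cast_gdeg, lt_div_iff₀ (by exact_mod_cast hd)]
  exact_mod_cast hn hex
end
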